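/- In the undiscounted, fully positively correlated limiting setup (γ=1), for any ρ ∈ [0,1] the variance ratio R_1(N) = (N + ρ(N² − N)) / (A + ρB), where A = (1/N²)Σ_{j=1}^N j² and B = ((1/N)Σ_{j=1}^N j)² − A, satisfies 1 ≤ R_1(N) < 4 for all N ≥ 1. -/
import Mathlib

lemma sum_Icc_id (N : ℕ) : ∑ j ∈ Finset.Icc 1 N, (j : ℝ) = N * (N + 1) / 2 := by
  induction N with
  | zero => simp
  | succ n ih =>
    rw [Finset.sum_Icc_succ_top (by omega : 1 ≤ n + 1), ih]
    push_cast
    ring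

lemma sum_Icc_sq (N : ℕ) : ∑ j ∈ Finset.Icc 1 N, (j : ℝ) ^ 2 = N * (N + 1) * (2 * N + 1) / 6 := by
  induction N with
  | zero => simp
  | succ n ih =>
    rw [Finset.sum_Icc_succ_top (by omega : 1 ≤ n + 1), ih]
    push_cast
    ring

/-- For `γ = 1` and any correlation `ρ ∈ [0,1]`, the variance ratio
`R₁(N) = (N + ρ(N² − N)) / (A + ρB)` with `A = (1/N²) Σ_{j=1}^N j²` and
`B = ((1/N) Σ_{j=1}^N j)² − A` satisfies `1 ≤ R₁(N) < 4` for all `N ≥ 1`. -/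
theorem variance_ratio_equicorrelated_bounds
    (N : ℕ) (hN : 1 ≤ N) (ρ : ℝ) (hρ : ρ ∈ Set.Icc (0 : ℝ) 1)
    (A B R : ℝ)
    (hA : A = (1 / (N : ℝ) ^ 2) * ∑ j ∈ Finset.Icc 1 N, (j : ℝ) ^ 2)
    (hB : B = ((1 / (N : ℝ)) * ∑ j ∈ Finset.Icc 1 N, (j : ℝ)) ^ 2 - A)
    (hR : R = ((N : ℝ) + ρ * ((N : ℝ) ^ 2 - (N : ℝ))) / (A + ρ * B)) :
    1 ≤ R ∧ R < 4 := by
  obtain ⟨hρ0, hρ1⟩ := hρ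
  set n : ℝ := (N : ℝ) with hn
  have hn1 : (1 : ℝ) ≤ n := Nat.one_le_cast.mpr hN
  have hnpos : (0 : ℝ) < n := by linarith
  have hA' : A = (n + 1) * (2 * n + 1) / (6 * n) := by
    rw [hA, sum_Icc_sq]
    field_simp
    ring
  have hB' : B = (n + 1) * (3 * n + 2) * (n - 1) / (12 * n) := by
    rw [hB, sum_Icc_id, hA']
    field_simp
    ring
  have hD : 0 < A + ρ * B := by
    rw [hA', hB']
    have hB0 : 0 ≤ (n + 1) * (3 * n + 2) * (n - 1) / (12 * n) := by
      apply div_nonneg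
      · nlinarith
      · linarith
    have hA0 : 0 < (n + 1) * (2 * n + 1) / (6 * n) := by
      apply div_pos
      · nlinarith
      · linarith
    nlinarith [mul_nonneg hρ0 hB0]
  have h12 : 12 * n * (A + ρ * B) =
      2 * (n + 1) * (2 * n + 1) + ρ * ((n + 1) * (3 * n + 2) * (n - 1)) := by
    rw [hA', hB']
    field_simp
    ring
  constructor
  · rw [hR, le_div_iff₀ hD, one_mul]
    nlinarith [mul_nonneg hρ0 (sub_nonneg.2 hn1), mul_nonneg (mul_nonneg hρ0 (sub_nonneg.2 hn1)) (sub_nonneg.2 hn1)]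
  · rw [hR, div_lt_iff₀ hD]
    nlinarith [mul_nonneg hρ0 (sub_nonneg.2 hn1), mul_nonneg (mul_nonneg hρ0 (sub_nonneg.2 hn1)) (sub_nonneg.2 hn1)]
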